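/- arXiv:1306.5705 — 2 statements merged into one kernel-verified Lean document; each statement's English description precedes it below -/
import Mathlib

section
/- (Rockafellar–Uryasev) For any real random variable X with E[X] < ∞ and continuous distribution, the function F_p(X, η) := η + (1/(1−p)) E[(X − η)_+] is convex in η, CVaR^p(X) := E[X | X ≥ VaR^p(X)] equals min_{η ∈ ℝ} F_p(X, η), the set of minimizers is nonempty, closed and bounded, VaR^p(X) is a minimizer, and CVaR^p(X) = F_p(X, VaR^p(X)). -/
open MeasureTheory

/-- (Rockafellar–Uryasev) For an integrable random variable `X` with continuous distribution
(`P(X ≥ VaR^p(X)) = 1 - p`), the function `F_p(X, η) = η + (1/(1-p)) E[(X - η)₊]` is convex,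
`CVaR^p(X) := E[X | X ≥ VaR^p(X)]` equals `min_η F_p(X, η)`, the set of minimizers is nonempty,
closed and bounded, `VaR^p(X)` is a minimizer, and `CVaR^p(X) = F_p(X, VaR^p(X))`. -/
theorem rockafellar_uryasev
    {Ω : Type*} [MeasurableSpace Ω] (P : Measure Ω) [IsProbabilityMeasure P]
    (X : Ω → ℝ) (hX : Measurable X) (hint : Integrable X P)
    (p : ℝ) (hp : p ∈ Set.Ioo (0 : ℝ) 1)
    (F : ℝ → ℝ)
    (hF : ∀ η : ℝ, F η = η + (1 / (1 - p)) * ∫ ω, max (X ω - η) 0 ∂P)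
    (v : ℝ) (hv : v = sInf {η : ℝ | P {ω | X ω ≤ η} ≥ ENNReal.ofReal p})
    (hmass : P {ω | v ≤ X ω} = ENNReal.ofReal (1 - p))
    (cvar : ℝ)
    (hcvar : cvar = (∫ ω in {ω | v ≤ X ω}, X ω ∂P) / (1 - p)) :
    ConvexOn ℝ Set.univ F ∧
    (∀ η : ℝ, F v ≤ F η) ∧
    cvar = F v ∧
    {η : ℝ | ∀ η' : ℝ, F η ≤ F η'}.Nonempty ∧
    IsClosed {η : ℝ | ∀ η' : ℝ, F η ≤ F η'} ∧
    Bornology.IsBounded {η : ℝ | ∀ η' : ℝ, F η ≤ F η'} := by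
  have hpos : (0:ℝ) < 1 - p := by linarith [hp.2]
  have hs : MeasurableSet {ω | v ≤ X ω} := measurableSet_le measurable_const hX
  have hI : ∀ η : ℝ, Integrable (fun ω => max (X ω - η) 0) P :=
    fun η => (hint.sub (integrable_const η)).pos_part
  have hmassR : (P {ω | v ≤ X ω}).toReal = 1 - p := by
    rw [hmass, ENNReal.toReal_ofReal hpos.le]
  -- integral of indicator constant
  have hindint : ∀ c : ℝ, ∫ ω, Set.indicator {ω | v ≤ X ω} (fun _ => c) ω ∂P = c * (1 - p) := by
    intro c
    rw [integral_indicator_const c hs, measureReal_def, hmassR, smul_eq_mul, mul_comm]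
  -- minimality
  have hmin : ∀ η : ℝ, F v ≤ F η := by
    intro η
    have hind : Integrable (Set.indicator {ω | v ≤ X ω} (fun _ => v - η)) P :=
      (integrable_const _).indicator hs
    have hmono : (∫ ω, max (X ω - v) 0 ∂P) + (v - η) * (1 - p) ≤ ∫ ω, max (X ω - η) 0 ∂P := by
      rw [← hindint (v - η), ← integral_add (hI v) hind]
      refine integral_mono ((hI v).add hind) (hI η) ?_
      intro ω
      by_cases h : v ≤ X ω
      · have hi : Set.indicator {ω | v ≤ X ω} (fun _ => v - η) ω = v - η := by
          simp only [Set.indicator_apply, Set.mem_setOf_eq, if_pos h]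
        simp only [Pi.add_apply, hi]
        have h1 : max (X ω - v) 0 = X ω - v := max_eq_left (by linarith)
        rw [h1]
        have : X ω - v + (v - η) = X ω - η := by ring
        rw [this]
        exact le_max_left _ _
      · have hi : Set.indicator {ω | v ≤ X ω} (fun _ => v - η) ω = 0 := by
          simp only [Set.indicator_apply, Set.mem_setOf_eq, if_neg h]
        simp only [Pi.add_apply, hi, add_zero]
        have h1 : max (X ω - v) 0 = 0 := max_eq_right (by push_neg at h; linarith)
        rw [h1]; exact le_max_right _ _
    rw [hF v, hF η]
    have hc : (0:ℝ) < 1 / (1 - p) := by positivity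
    have h2 := mul_le_mul_of_nonneg_left hmono hc.le
    rw [mul_add] at h2
    have h3 : (1 / (1 - p)) * (1 - p) = 1 := one_div_mul_cancel hpos.ne'
    have h4 : (1 / (1 - p)) * ((v - η) * (1 - p)) = v - η := by
      rw [show (1 / (1 - p)) * ((v - η) * (1 - p)) = (v - η) * ((1 / (1 - p)) * (1 - p)) from
        by ring, h3, mul_one]
    linarith [h2, h4]
  -- cvar = F v
  have hcv : cvar = F v := by
    have heq : (fun ω => max (X ω - v) 0)
        = Set.indicator {ω | v ≤ X ω} (fun ω => X ω - v) := by
      funext ω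
      by_cases h : v ≤ X ω
      · rw [Set.indicator_apply, if_pos (show ω ∈ {ω | v ≤ X ω} from h)]
        exact max_eq_left (by linarith)
      · rw [Set.indicator_apply, if_neg (show ω ∉ {ω | v ≤ X ω} from h)]
        exact max_eq_right (by push_neg at h; linarith)
    have hsi : ∫ ω, max (X ω - v) 0 ∂P
        = (∫ ω in {ω | v ≤ X ω}, X ω ∂P) - v * (1 - p) := by
      rw [heq, integral_indicator hs]
      rw [integral_sub hint.integrableOn (integrableOn_const (measure_ne_top _ _))]
      rw [setIntegral_const, measureReal_def, hmassR, smul_eq_mul]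
      ring
    rw [hcvar, hF v, hsi]
    field_simp
    ring
  -- continuity of F
  have hcont : Continuous F := by
    have hg : LipschitzWith 1 (fun η : ℝ => ∫ ω, max (X ω - η) 0 ∂P) := by
      refine LipschitzWith.of_dist_le_mul (fun a b => ?_)
      rw [Real.dist_eq, Real.dist_eq, NNReal.coe_one, one_mul]
      rw [← integral_sub (hI a) (hI b)]
      calc |∫ ω, (max (X ω - a) 0 - max (X ω - b) 0) ∂P|
          ≤ ∫ ω, |max (X ω - a) 0 - max (X ω - b) 0| ∂P := by
            simpa [Real.norm_eq_abs] using
              norm_integral_le_integral_norm (fun ω => max (X ω - a) 0 - max (X ω - b) 0) (μ := P)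
        _ ≤ ∫ (_ : Ω), |a - b| ∂P := by
            refine integral_mono ((hI a).sub (hI b)).abs (integrable_const _) (fun ω => ?_)
            calc |max (X ω - a) 0 - max (X ω - b) 0| ≤ |(X ω - a) - (X ω - b)| :=
              abs_max_sub_max_le_abs _ _ _
            _ = |a - b| := by rw [show (X ω - a) - (X ω - b) = -(a - b) by ring, abs_neg]
        _ = |a - b| := by simp
    have : Continuous (fun η : ℝ => η + (1 / (1 - p)) * ∫ ω, max (X ω - η) 0 ∂P) :=
      continuous_id.add (continuous_const.mul hg.continuous)
    have hFe : F = fun η : ℝ => η + (1 / (1 - p)) * ∫ ω, max (X ω - η) 0 ∂P := funext hF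
    rw [hFe]; exact this
  refine ⟨?_, hmin, hcv, ⟨v, hmin⟩, ?_, ?_⟩
  · -- convexity
    refine ⟨convex_univ, fun x _ y _ a b ha hb hab => ?_⟩
    simp only [smul_eq_mul]
    have hpt : ∀ ω, max (X ω - (a * x + b * y)) 0
        ≤ a * max (X ω - x) 0 + b * max (X ω - y) 0 := by
      intro ω
      refine max_le ?_ (by positivity)
      have : X ω - (a * x + b * y) = a * (X ω - x) + b * (X ω - y) := by
        linear_combination (-(X ω)) * hab
      rw [this]
      gcongr <;> [exact le_max_left _ _; exact le_max_left _ _]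
    have hintr : Integrable (fun ω => a * max (X ω - x) 0 + b * max (X ω - y) 0) P :=
      ((hI x).const_mul a).add ((hI y).const_mul b)
    have hImono : ∫ ω, max (X ω - (a * x + b * y)) 0 ∂P
        ≤ a * (∫ ω, max (X ω - x) 0 ∂P) + b * (∫ ω, max (X ω - y) 0 ∂P) := by
      rw [← integral_const_mul, ← integral_const_mul, ← integral_add ((hI x).const_mul a)
        ((hI y).const_mul b)]
      exact integral_mono (hI _) hintr hpt
    rw [hF, hF, hF]
    have hc : (0:ℝ) ≤ 1 / (1 - p) := by positivity
    nlinarith [mul_le_mul_of_nonneg_left hImono hc]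
  · -- closed
    have : {η : ℝ | ∀ η' : ℝ, F η ≤ F η'} = ⋂ η' : ℝ, {η : ℝ | F η ≤ F η'} :=
      Set.setOf_forall _
    rw [this]
    exact isClosed_iInter fun η' => isClosed_le hcont continuous_const
  · -- bounded
    have hEX : ∀ η : ℝ, (∫ ω, X ω ∂P) - η ≤ ∫ ω, max (X ω - η) 0 ∂P := by
      intro η
      have : (∫ ω, X ω ∂P) - η = ∫ ω, (X ω - η) ∂P := by
        rw [integral_sub hint (integrable_const _)]; simp
      rw [this]
      exact integral_mono (hint.sub (integrable_const _)) (hI η) fun ω => le_max_left _ _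
    refine (Metric.isBounded_Icc (((∫ ω, X ω ∂P) - (1 - p) * F v) / p) (F v)).subset ?_
    intro η hη
    have h1 : F η ≤ F v := hη v
    have hInn : (0:ℝ) ≤ ∫ ω, max (X ω - η) 0 ∂P :=
      integral_nonneg fun ω => le_max_right _ _
    constructor
    · rw [div_le_iff₀ hp.1]
      have h2 := hF η
      have h3 := hEX η
      have hc : (0:ℝ) ≤ 1 / (1 - p) := by positivity
      have h4 := mul_le_mul_of_nonneg_left h3 hc
      have h5 : (1 / (1 - p)) * (1 - p) = 1 := one_div_mul_cancel hpos.ne'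
      nlinarith [h4, h5, h1, h2]
    · have : η ≤ F η := by
        rw [hF η]
        have hc : (0:ℝ) ≤ 1 / (1 - p) := by positivity
        nlinarith [mul_nonneg hc hInn]
      linarith
end

section
/- If X has a density and is integrable, then η ↦ F_p(X, η) = η + (1/(1−p)) E[(X − η)_+] is continuously differentiable with derivative 1 − (1/(1−p)) P(X > η), and VaR^p(X) is a critical point (where P(X > η) = 1−p) hence a global minimizer. -/
open MeasureTheory Set Filter Topology

private lemma deriv_pospart {Ω : Type*} [MeasurableSpace Ω] (P : Measure Ω)
    [IsProbabilityMeasure P]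
    (X : Ω → ℝ) (hX : Measurable X) (hint : Integrable X P) (η₀ : ℝ)
    (hne : ∀ᵐ ω ∂P, X ω ≠ η₀) :
    HasDerivAt (fun η => ∫ ω, max (X ω - η) 0 ∂P)
      (-(P {ω | η₀ < X ω}).toReal) η₀ := by
  have hs : MeasurableSet {ω | η₀ < X ω} := hX measurableSet_Ioi
  have key := hasDerivAt_integral_of_dominated_loc_of_lip
    (F := fun η ω => max (X ω - η) 0)
    (F' := Set.indicator {ω | η₀ < X ω} (fun _ => (-1 : ℝ)))
    (μ := P) (bound := fun _ => (1 : ℝ)) (s := Set.univ) Filter.univ_mem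
    (Filter.Eventually.of_forall fun η =>
      ((hX.sub measurable_const).max measurable_const).aestronglyMeasurable)
    ((hint.sub (integrable_const η₀)).pos_part)
    ((measurable_const.indicator hs).aestronglyMeasurable)
    (Filter.Eventually.of_forall fun ω => ?_)
    (integrable_const 1)
    (hne.mono fun ω hω => ?_)
  · have h1 : ∫ ω, Set.indicator {ω | η₀ < X ω} (fun _ => (-1 : ℝ)) ω ∂P
        = -(P {ω | η₀ < X ω}).toReal := by
      rw [integral_indicator_const (-1 : ℝ) hs]; simp [measureReal_def]
    rw [h1] at key
    exact key.2
  · have hL : LipschitzWith (Real.nnabs (1:ℝ)) (fun η => max (X ω - η) 0) := by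
      refine LipschitzWith.of_dist_le_mul fun a b => ?_
      simp only [Real.dist_eq]
      have h2 := abs_max_sub_max_le_abs (X ω - a) (X ω - b) 0
      calc |max (X ω - a) 0 - max (X ω - b) 0| ≤ |(X ω - a) - (X ω - b)| := h2
        _ = |a - b| := by rw [abs_sub_comm]; ring_nf
        _ ≤ ↑(Real.nnabs 1) * |a - b| := by simp
    exact hL.lipschitzOnWith
  · rcases lt_or_gt_of_ne hω with h | h
    · have h0 : Set.indicator {ω' | η₀ < X ω'} (fun _ => (-1 : ℝ)) ω = 0 := by
        simp [Set.indicator_of_notMem, h.not_gt]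
      rw [h0]
      have hev : (fun η => max (X ω - η) 0) =ᶠ[nhds η₀] fun _ => (0 : ℝ) := by
        filter_upwards [Ioi_mem_nhds h] with η hη
        exact max_eq_right (by linarith [mem_Ioi.mp hη])
      exact (hasDerivAt_const η₀ (0:ℝ)).congr_of_eventuallyEq hev
    · have h0 : Set.indicator {ω' | η₀ < X ω'} (fun _ => (-1 : ℝ)) ω = -1 := by
        simp only [Set.indicator_of_mem, Set.mem_setOf_eq, h]
      rw [h0]
      have hev : (fun η => max (X ω - η) 0) =ᶠ[nhds η₀] fun η => X ω - η := by
        filter_upwards [Iio_mem_nhds h] with η hη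
        exact max_eq_left (by linarith [mem_Iio.mp hη])
      exact ((hasDerivAt_id η₀).const_sub (X ω)).congr_of_eventuallyEq hev

/-- If `X` has a probability density and is integrable, then
`η ↦ F_p(X, η) = η + (1/(1-p)) E[(X - η)₊]` is continuously differentiable with derivative
`1 - (1/(1-p)) P(X > η)`, and `VaR^p(X)` is a critical point (where `P(X > η) = 1 - p`),
hence a global minimizer. -/
theorem F_p_differentiable_var_minimizer
    {Ω : Type*} [MeasurableSpace Ω] (P : Measure Ω) [IsProbabilityMeasure P]
    (X : Ω → ℝ) (hX : Measurable X) (hint : Integrable X P)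
    (f : ℝ → ℝ) (hf : Measurable f)
    (hdens : Measure.map X P = MeasureTheory.volume.withDensity fun x => ENNReal.ofReal (f x))
    (p : ℝ) (hp : p ∈ Set.Ioo (0 : ℝ) 1)
    (F : ℝ → ℝ)
    (hF : ∀ η : ℝ, F η = η + (1 / (1 - p)) * ∫ ω, max (X ω - η) 0 ∂P)
    (v : ℝ) (hv : v = sInf {η : ℝ | P {ω | X ω ≤ η} ≥ ENNReal.ofReal p}) :
    (∀ η : ℝ, HasDerivAt F (1 - (1 / (1 - p)) * (P {ω | η < X ω}).toReal) η) ∧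
    (Continuous fun η : ℝ => 1 - (1 / (1 - p)) * (P {ω | η < X ω}).toReal) ∧
    (P {ω | v < X ω}).toReal = 1 - p ∧
    (∀ η : ℝ, F v ≤ F η) := by
  obtain ⟨hp0, hp1⟩ := hp
  have h1p : (0:ℝ) < 1 - p := by linarith
  set c' : ℝ := 1 / (1 - p) with hc'
  have hc'pos : 0 < c' := by positivity
  set g : ℝ → ℝ := fun x => max (f x) 0 with hgdef
  have hgm : Measurable g := hf.max measurable_const
  have hg0 : ∀ x, 0 ≤ g x := fun x => le_max_right _ _
  have hdens' : Measure.map X P = volume.withDensity fun x => ENNReal.ofReal (g x) := by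
    rw [hdens]
    congr 1
    funext x
    rcases le_or_gt 0 (f x) with h | h
    · rw [hgdef]; simp [max_eq_left h]
    · rw [hgdef]; simp [ENNReal.ofReal_of_nonpos h.le, max_eq_right h.le]
  have hmap : ∀ s : Set ℝ, MeasurableSet s →
      P (X ⁻¹' s) = ∫⁻ x in s, ENNReal.ofReal (g x) := by
    intro s hs
    rw [← Measure.map_apply hX hs, hdens', withDensity_apply _ hs]
  have hgi : Integrable g volume := by
    refine ⟨hgm.aestronglyMeasurable, ?_⟩
    rw [hasFiniteIntegral_iff_ofReal (Filter.Eventually.of_forall hg0)]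
    have := hmap Set.univ MeasurableSet.univ
    simp only [Set.preimage_univ, measure_univ, Measure.restrict_univ] at this
    rw [← this]
    exact ENNReal.one_lt_top
  -- the tail probability as an integral of the density
  have hT : ∀ η, (P {ω | η < X ω}).toReal = ∫ x in Ioi η, g x := by
    intro η
    have h1 : {ω | η < X ω} = X ⁻¹' Ioi η := rfl
    rw [h1, hmap _ measurableSet_Ioi,
      ← ofReal_integral_eq_lintegral_ofReal (hgi.integrableOn)
        (Filter.Eventually.of_forall fun x => hg0 x),
      ENNReal.toReal_ofReal (setIntegral_nonneg measurableSet_Ioi fun x _ => hg0 x)]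
  -- continuity of tail probability
  have hSsub : ∀ η, ∫ x in Ioi η, g x = (∫ x in Ioi (0:ℝ), g x) - ∫ x in (0:ℝ)..η, g x := by
    intro η
    rcases le_or_gt 0 η with h | h
    · rw [intervalIntegral.integral_of_le h]
      have hu : Ioc (0:ℝ) η ∪ Ioi η = Ioi 0 := Ioc_union_Ioi_eq_Ioi h
      have h2 := setIntegral_union (f := g) (μ := volume) (s := Ioc (0:ℝ) η) (t := Ioi η)
        (Ioc_disjoint_Ioi le_rfl) measurableSet_Ioi (hgi.integrableOn) (hgi.integrableOn)
      rw [hu] at h2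
      rw [h2]; ring
    · rw [intervalIntegral.integral_of_ge h.le]
      have hu : Ioc η 0 ∪ Ioi (0:ℝ) = Ioi η := Ioc_union_Ioi_eq_Ioi h.le
      have h2 := setIntegral_union (f := g) (μ := volume) (s := Ioc η (0:ℝ)) (t := Ioi (0:ℝ))
        (Ioc_disjoint_Ioi le_rfl) measurableSet_Ioi (hgi.integrableOn) (hgi.integrableOn)
      rw [hu] at h2
      rw [h2]; ring
  have hTcont : Continuous fun η => (P {ω | η < X ω}).toReal := by
    have hprim : Continuous fun η => ∫ x in (0:ℝ)..η, g x :=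
      intervalIntegral.continuous_primitive (fun a b => hgi.intervalIntegrable) 0
    have := (continuous_const.sub hprim).congr fun η => (hSsub η).symm
    exact this.congr fun η => (hT η).symm
  -- no atoms
  have hXne : ∀ η₀ : ℝ, ∀ᵐ ω ∂P, X ω ≠ η₀ := by
    intro η₀
    rw [ae_iff]
    have h1 : {ω | ¬ X ω ≠ η₀} = X ⁻¹' {η₀} := by ext ω; simp
    rw [h1, hmap _ (measurableSet_singleton η₀),
      Measure.restrict_eq_zero.mpr (by simp), lintegral_zero_measure]
  -- Part 1 : derivative
  have hFderiv : ∀ η, HasDerivAt F (1 - c' * (P {ω | η < X ω}).toReal) η := by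
    intro η
    have hG := deriv_pospart P X hX hint η (hXne η)
    have h1 : HasDerivAt (fun η' => η' + c' * ∫ ω, max (X ω - η') 0 ∂P)
        (1 + c' * -(P {ω | η < X ω}).toReal) η :=
      (hasDerivAt_id η).add (hG.const_mul c')
    have hFeq : F = fun η' => η' + c' * ∫ ω, max (X ω - η') 0 ∂P := funext hF
    rw [hFeq]
    convert h1 using 1
    ring
  -- Part 2 : continuity of derivative
  have hcont2 : Continuous fun η : ℝ => 1 - c' * (P {ω | η < X ω}).toReal :=
    continuous_const.sub (continuous_const.mul hTcont)
  -- cdf facts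
  have hcdf : ∀ η, (P {ω | X ω ≤ η}).toReal = 1 - (P {ω | η < X ω}).toReal := by
    intro η
    have hco : {ω | η < X ω} = {ω | X ω ≤ η}ᶜ := by ext ω; simp
    have hms : MeasurableSet {ω | X ω ≤ η} := hX measurableSet_Iic
    have h2 : P {ω | X ω ≤ η} + P {ω | η < X ω} = 1 := by
      rw [hco, measure_add_measure_compl hms, measure_univ]
    have h3 : (P {ω | X ω ≤ η}).toReal + (P {ω | η < X ω}).toReal = 1 := by
      rw [← ENNReal.toReal_add (measure_ne_top _ _) (measure_ne_top _ _), h2, ENNReal.toReal_one]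
    linarith
  have hccont : Continuous fun η => (P {ω | X ω ≤ η}).toReal := by
    have h1 : Continuous fun η : ℝ => 1 - (P {ω | η < X ω}).toReal :=
      continuous_const.sub hTcont
    exact h1.congr fun η => (hcdf η).symm
  have hcmono : Monotone fun η => (P {ω | X ω ≤ η}).toReal := fun a b hab =>
    ENNReal.toReal_mono (measure_ne_top _ _) (measure_mono fun ω h => le_trans h hab)
  have hAeq : {η : ℝ | P {ω | X ω ≤ η} ≥ ENNReal.ofReal p}
      = {η : ℝ | p ≤ (P {ω | X ω ≤ η}).toReal} := by
    ext η
    exact ENNReal.ofReal_le_iff_le_toReal (measure_ne_top _ _)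
  have hAne : Set.Nonempty {η : ℝ | p ≤ (P {ω | X ω ≤ η}).toReal} := by
    have hmono : Monotone fun n : ℕ => {ω | X ω ≤ (n:ℝ)} := by
      intro a b hab ω h
      simp only [mem_setOf_eq] at h ⊢
      exact le_trans h (by exact_mod_cast hab)
    have hU : ⋃ n : ℕ, {ω | X ω ≤ (n:ℝ)} = Set.univ := by
      ext ω; simp only [mem_iUnion, mem_univ, iff_true, mem_setOf_eq]
      exact exists_nat_ge (X ω)
    have h := tendsto_measure_iUnion_atTop (μ := P) hmono
    rw [hU, measure_univ] at h
    have h2 : Tendsto (fun n : ℕ => (P {ω | X ω ≤ (n:ℝ)}).toReal) atTop (𝓝 1) := by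
      have := (ENNReal.tendsto_toReal ENNReal.one_ne_top).comp h
      simpa [Function.comp_def] using this
    obtain ⟨n, hn⟩ := (h2.eventually_const_le hp1).exists
    exact ⟨(n:ℝ), hn⟩
  have hbdd : BddBelow {η : ℝ | p ≤ (P {ω | X ω ≤ η}).toReal} := by
    have hanti : Antitone fun n : ℕ => {ω | X ω ≤ -(n:ℝ)} := by
      intro a b hab ω h
      simp only [mem_setOf_eq] at h ⊢
      have hab' : (a:ℝ) ≤ b := by exact_mod_cast hab
      linarith
    have hI : ⋂ n : ℕ, {ω | X ω ≤ -(n:ℝ)} = (∅ : Set Ω) := by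
      ext ω; simp only [mem_iInter, mem_empty_iff_false, iff_false, mem_setOf_eq]
      push_neg
      obtain ⟨n, hn⟩ := exists_nat_gt (-X ω)
      exact ⟨n, by linarith⟩
    have hms : ∀ n : ℕ, NullMeasurableSet {ω | X ω ≤ -(n:ℝ)} P := fun n =>
      (hX measurableSet_Iic).nullMeasurableSet
    have h := tendsto_measure_iInter_atTop (μ := P) hms hanti ⟨0, measure_ne_top _ _⟩
    rw [hI, measure_empty] at h
    have h2 : Tendsto (fun n : ℕ => (P {ω | X ω ≤ -(n:ℝ)}).toReal) atTop (𝓝 0) := by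
      have := (ENNReal.tendsto_toReal ENNReal.zero_ne_top).comp h
      simpa [Function.comp_def] using this
    obtain ⟨n, hn⟩ := (h2.eventually_lt_const hp0).exists
    refine ⟨-(n:ℝ), fun a ha => ?_⟩
    by_contra hlt
    push_neg at hlt
    have : (P {ω | X ω ≤ a}).toReal ≤ (P {ω | X ω ≤ -(n:ℝ)}).toReal := hcmono hlt.le
    have hpa : p ≤ (P {ω | X ω ≤ a}).toReal := ha
    linarith
  have hclosed : IsClosed {η : ℝ | p ≤ (P {ω | X ω ≤ η}).toReal} :=
    isClosed_le continuous_const hccont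
  have hvmem : p ≤ (P {ω | X ω ≤ v}).toReal := by
    have : v ∈ {η : ℝ | p ≤ (P {ω | X ω ≤ η}).toReal} := by
      rw [hv, hAeq]
      exact hclosed.csInf_mem hAne hbdd
    exact this
  have hvle : (P {ω | X ω ≤ v}).toReal ≤ p := by
    by_contra h
    push_neg at h
    have hopen : IsOpen {η : ℝ | p < (P {ω | X ω ≤ η}).toReal} :=
      isOpen_lt continuous_const hccont
    have hnb : {η : ℝ | p < (P {ω | X ω ≤ η}).toReal} ∈ nhds v := hopen.mem_nhds h
    obtain ⟨ε, hε, hball⟩ := Metric.mem_nhds_iff.mp hnb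
    have hwmem : v - ε/2 ∈ {η : ℝ | p < (P {ω | X ω ≤ η}).toReal} := by
      apply hball
      simp only [Metric.mem_ball, Real.dist_eq]
      rw [abs_of_nonpos (by linarith)]
      linarith
    have hwlt : p < (P {ω | X ω ≤ v - ε/2}).toReal := hwmem
    have hwA : v - ε/2 ∈ {η : ℝ | p ≤ (P {ω | X ω ≤ η}).toReal} := hwlt.le
    have hle2 : sInf {η : ℝ | P {ω | X ω ≤ η} ≥ ENNReal.ofReal p} ≤ v - ε/2 := by
      rw [hAeq]
      exact csInf_le hbdd hwA
    rw [← hv] at hle2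
    linarith
  have hcv : (P {ω | X ω ≤ v}).toReal = p := le_antisymm hvle hvmem
  have hTv : (P {ω | v < X ω}).toReal = 1 - p := by
    have := hcdf v
    rw [hcv] at this
    linarith
  -- Part 4 : global minimizer
  have hTanti : Antitone fun η => (P {ω | η < X ω}).toReal := fun a b hab =>
    ENNReal.toReal_mono (measure_ne_top _ _) (measure_mono fun ω h => lt_of_le_of_lt hab h)
  have hdiff : Differentiable ℝ F := fun η => (hFderiv η).differentiableAt
  have hderiv : ∀ η, deriv F η = 1 - c' * (P {ω | η < X ω}).toReal := fun η =>
    (hFderiv η).deriv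
  have hone : c' * (1 - p) = 1 := by
    rw [hc']; field_simp
  have hanti : AntitoneOn F (Iic v) := by
    apply antitoneOn_of_deriv_nonpos (convex_Iic v) hdiff.continuous.continuousOn
      (fun x _ => (hdiff x).differentiableWithinAt)
    intro x hx
    rw [interior_Iic] at hx
    rw [hderiv]
    have h1 : (1:ℝ) - p ≤ (P {ω | x < X ω}).toReal := by
      rw [← hTv]; exact hTanti (le_of_lt hx)
    nlinarith [mul_le_mul_of_nonneg_left h1 hc'pos.le]
  have hmonoF : MonotoneOn F (Ici v) := by
    apply monotoneOn_of_deriv_nonneg (convex_Ici v) hdiff.continuous.continuousOn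
      (fun x _ => (hdiff x).differentiableWithinAt)
    intro x hx
    rw [interior_Ici] at hx
    rw [hderiv]
    have h1 : (P {ω | x < X ω}).toReal ≤ 1 - p := by
      rw [← hTv]; exact hTanti (le_of_lt hx)
    nlinarith [mul_le_mul_of_nonneg_left h1 hc'pos.le]
  refine ⟨hFderiv, hcont2, hTv, fun η => ?_⟩
  rcases le_total η v with h | h
  · exact hanti (mem_Iic.mpr h) (mem_Iic.mpr le_rfl) h
  · exact hmonoF (mem_Ici.mpr le_rfl) (mem_Ici.mpr h) h
end
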